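/- Let u : [0,T] × ℝ^d → ℝ be a classical solution of the backward PDE ∂_t u(t,x) + (1/2) Δ_x u(t,x) + f(t,x,u(t,x)) = 0 on [0,T) × ℝ^d with continuous extension to [0,T], where y f(t,x,y) ≤ c(1+y²), and satisfying a Gaussian growth bound inf_{a∈ℝ} sup_{(s,y)} e^{a‖y‖²}|u(s,y)| < ∞. Then for every t ∈ [0,T]: sup_{x ∈ ℝ^d} |u(t,x)| ≤ e^{c(T-t)} (1 + sup_{x ∈ ℝ^d} |u(T,x)|²)^{1/2}. -/

import Mathlib

open scoped ENNReal

/-- Coordinatewise Laplacian of a function on Euclidean space. -/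
noncomputable def lap (d : ℕ) (f : EuclideanSpace ℝ (Fin d) → ℝ)
    (x : EuclideanSpace ℝ (Fin d)) : ℝ :=
  ∑ k : Fin d, iteratedDeriv 2 (fun s : ℝ => f (x + s • EuclideanSpace.single k (1:ℝ))) 0

open Real Set

section Helpers


-- A: derivative of exp of a quadratic
lemma hasDerivAt_exp_quad (a b c m : ℝ) :
    HasDerivAt (fun x : ℝ => Real.exp (a + b*x + c*x^2))
      ((b + 2*c*m) * Real.exp (a + b*m + c*m^2)) m := by
  have h : HasDerivAt (fun x : ℝ => a + b*x + c*x^2) (b + 2*c*m) m := by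
    have h1 : HasDerivAt (fun x : ℝ => b * x) b m := by
      simpa using (hasDerivAt_id m).const_mul b
    have h2 : HasDerivAt (fun x : ℝ => c * x^2) (c * (2*m)) m := by
      have := (hasDerivAt_pow 2 m).const_mul c
      simpa using this
    have := ((hasDerivAt_const m a).add h1).add h2
    convert (show HasDerivAt (fun x : ℝ => a + b*x + c*x^2) _ m from this) using 1
    ring
  have := h.exp
  convert this using 1
  ring

lemma deriv_exp_quad (a b c : ℝ) :
    deriv (fun x : ℝ => Real.exp (a + b*x + c*x^2))
      = fun m => (b + 2*c*m) * Real.exp (a + b*m + c*m^2) := by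
  funext m
  exact (hasDerivAt_exp_quad a b c m).deriv

lemma itd2 (f : ℝ → ℝ) (x : ℝ) : iteratedDeriv 2 f x = deriv (deriv f) x := by
  rw [show (2:ℕ) = 1 + 1 from rfl, iteratedDeriv_succ, iteratedDeriv_one]

-- B: second derivative at 0 of exp quad
lemma iteratedDeriv_two_exp_quad (a b c : ℝ) :
    iteratedDeriv 2 (fun x : ℝ => Real.exp (a + b*x + c*x^2)) 0
      = (b^2 + 2*c) * Real.exp a := by
  rw [itd2, deriv_exp_quad]
  have h1 : HasDerivAt (fun m : ℝ => b + 2*c*m) (2*c) 0 := by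
    simpa using ((hasDerivAt_id (0:ℝ)).const_mul (2*c)).const_add b
  have h2 := hasDerivAt_exp_quad a b c 0
  have := h1.mul h2
  rw [(show HasDerivAt (fun m => (b + 2*c*m) * Real.exp (a + b*m + c*m^2)) _ 0 from this).deriv]
  simp
  ring

-- contdiff of exp quad
lemma contDiff_exp_quad (a b c : ℝ) :
    ContDiff ℝ 2 (fun x : ℝ => Real.exp (a + b*x + c*x^2)) :=
  Real.contDiff_exp.comp
    ((contDiff_const.add (contDiff_const.mul contDiff_id)).add
      (contDiff_const.mul (contDiff_id.pow 2)))


lemma itd2' (f : ℝ → ℝ) (x : ℝ) : iteratedDeriv 2 f x = deriv (deriv f) x := by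
  rw [show (2:ℕ) = 1 + 1 from rfl, iteratedDeriv_succ, iteratedDeriv_one]

lemma contdiff2_deriv {g : ℝ → ℝ} (hg : ContDiff ℝ 2 g) :
    Differentiable ℝ g ∧ Differentiable ℝ (deriv g) := by
  have h : ContDiff ℝ (1+1) g := by rw [one_add_one_eq_two]; exact hg
  rw [contDiff_succ_iff_deriv] at h
  exact ⟨h.1, h.2.2.differentiable one_ne_zero⟩

lemma iteratedDeriv_two_one_add_sq_mul {g : ℝ → ℝ} (hg : ContDiff ℝ 2 g) (E : ℝ) :
    iteratedDeriv 2 (fun m => (1 + g m ^ 2) * E) 0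
      = (2*(deriv g 0)^2 + 2*(g 0)*(deriv (deriv g) 0)) * E := by
  obtain ⟨hgd, hgd'⟩ := contdiff2_deriv hg
  rw [itd2']
  have hder : deriv (fun m => (1 + g m ^ 2) * E) = fun m => (2 * g m * deriv g m) * E := by
    funext m
    have h : HasDerivAt (fun m => (1 + g m ^ 2) * E)
        ((2 * g m ^ 1 * deriv g m) * E) m :=
      ((((hgd m).hasDerivAt.pow 2).const_add 1).mul_const E)
    rw [h.deriv]; ring
  rw [hder]
  have h2 := (((hgd 0).hasDerivAt.const_mul 2).mul (hgd' 0).hasDerivAt).mul_const E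
  rw [(show HasDerivAt (fun m => 2 * g m * deriv g m * E) _ 0 from h2).deriv]
  ring

lemma iteratedDeriv_two_sub {f g : ℝ → ℝ} (c : ℝ) (hf : ContDiff ℝ 2 f)
    (hg : ContDiff ℝ 2 g) :
    iteratedDeriv 2 (fun m => f m - c * g m) 0
      = iteratedDeriv 2 f 0 - c * iteratedDeriv 2 g 0 := by
  obtain ⟨hfd, hfd'⟩ := contdiff2_deriv hf
  obtain ⟨hgd, hgd'⟩ := contdiff2_deriv hg
  rw [itd2', itd2', itd2']
  have hder : deriv (fun m => f m - c * g m) = fun m => deriv f m - c * deriv g m := by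
    funext m
    exact ((hfd m).hasDerivAt.sub ((hgd m).hasDerivAt.const_mul c)).deriv
  rw [hder]
  exact ((hfd' 0).hasDerivAt.sub ((hgd' 0).hasDerivAt.const_mul c)).deriv

lemma iteratedDeriv_two_nonpos_of_max {g : ℝ → ℝ} (hg : ContDiff ℝ 2 g)
    (hmax : ∀ m, g m ≤ g 0) : iteratedDeriv 2 g 0 ≤ 0 := by
  obtain ⟨hgd, hgd'⟩ := contdiff2_deriv hg
  by_contra hD
  push_neg at hD
  rw [itd2'] at hD
  have hd0 : deriv g 0 = 0 := by
    have : IsLocalMax g 0 := Filter.Eventually.of_forall hmax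
    exact this.deriv_eq_zero
  have hslope : Filter.Tendsto (slope (deriv g) 0)
      (nhdsWithin 0 {(0:ℝ)}ᶜ) (nhds (deriv (deriv g) 0)) := by
    have := (hgd' 0).hasDerivAt
    rwa [hasDerivAt_iff_tendsto_slope] at this
  have hev : ∀ᶠ x in nhdsWithin 0 {(0:ℝ)}ᶜ, 0 < slope (deriv g) 0 x :=
    hslope.eventually (eventually_gt_nhds hD)
  rw [eventually_nhdsWithin_iff, Metric.eventually_nhds_iff] at hev
  obtain ⟨δ, hδ, hball⟩ := hev
  have hpos : ∀ x : ℝ, 0 < x → x < δ → 0 < deriv g x := by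
    intro x hx hxδ
    have hmem : dist x 0 < δ := by
      rw [Real.dist_eq, sub_zero, abs_of_pos hx]; exact hxδ
    have h := hball hmem (by simp [ne_of_gt hx])
    rw [slope_def_field, hd0, sub_zero, sub_zero, div_pos_iff] at h
    rcases h with ⟨h1, _⟩ | ⟨_, h2⟩
    · exact h1
    · linarith
  -- MVT on [0, δ/2]
  have hmvt := exists_hasDerivAt_eq_slope g (deriv g) (by linarith : (0:ℝ) < δ/2)
    (hgd.continuous.continuousOn) (fun x _ => (hgd x).hasDerivAt)
  obtain ⟨ξ, hξ, hξeq⟩ := hmvt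
  have h1 : 0 < deriv g ξ := hpos ξ hξ.1 (by linarith [hξ.2])
  have h2 : g (δ/2) - g 0 ≤ 0 := by linarith [hmax (δ/2)]
  rw [hξeq, div_pos_iff] at h1
  rcases h1 with ⟨h1, _⟩ | ⟨_, hneg⟩
  · linarith
  · linarith

lemma deriv_nonpos_of_isMaxOn_Icc {f : ℝ → ℝ} {a b : ℝ} (hab : a < b)
    (hf : DifferentiableAt ℝ f a) (hmax : ∀ s ∈ Icc a b, f s ≤ f a) :
    deriv f a ≤ 0 := by
  have hloc : IsLocalMaxOn f (Icc a b) a :=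
    eventually_nhdsWithin_of_forall hmax
  have hy : b - a ∈ posTangentConeAt (Icc a b) a :=
    sub_mem_posTangentConeAt_of_segment_subset (by rw [segment_eq_Icc hab.le])
  have h := hloc.hasFDerivWithinAt_nonpos hf.hasFDerivAt.hasFDerivWithinAt hy
  have heq : (fderiv ℝ f a : ℝ → ℝ) (b - a) = (b - a) * deriv f a := by
    have : (b - a) = (b - a) • (1:ℝ) := by simp
    rw [this, map_smul, fderiv_apply_one_eq_deriv]
    simp [smul_eq_mul]
  rw [heq] at h
  nlinarith


variable {d : ℕ}

lemma eucl_norm_sq (x : EuclideanSpace ℝ (Fin d)) : ‖x‖^2 = ∑ i, (x i)^2 := by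
  rw [EuclideanSpace.norm_eq]
  rw [Real.sq_sqrt (by positivity)]
  congr 1
  funext i
  rw [Real.norm_eq_abs, sq_abs]

lemma line_apply (x : EuclideanSpace ℝ (Fin d)) (k : Fin d) (m : ℝ) (i : Fin d) :
    (x + m • EuclideanSpace.single k (1:ℝ)) i = x i + m * (if i = k then 1 else 0) := by
  simp [EuclideanSpace.single_apply]

lemma norm_line_sq (x : EuclideanSpace ℝ (Fin d)) (k : Fin d) (m : ℝ) :
    ‖x + m • EuclideanSpace.single k (1:ℝ)‖^2 = ‖x‖^2 + 2*(x k)*m + m^2 := by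
  rw [eucl_norm_sq, eucl_norm_sq]
  have h : ∀ i, ((x + m • EuclideanSpace.single k (1:ℝ)) i)^2
      = (x i)^2 + (if i = k then 2*(x k)*m + m^2 else 0) := by
    intro i
    rw [line_apply]
    by_cases h : i = k
    · subst h; simp; ring
    · simp [h]
  simp_rw [h, Finset.sum_add_distrib, Finset.sum_ite_eq' Finset.univ k]
  simp
  ring

lemma eucl_decomp (x : EuclideanSpace ℝ (Fin d)) :
    x = ∑ k, x k • EuclideanSpace.single k (1:ℝ) := by
  ext i
  have : (∑ k, x k • EuclideanSpace.single k (1:ℝ)) i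
      = ∑ k, (x k • EuclideanSpace.single k (1:ℝ)) i := by
    rw [WithLp.ofLp_sum, Finset.sum_apply]
  rw [this]
  simp [EuclideanSpace.single_apply]

lemma coord_le_norm (x : EuclideanSpace ℝ (Fin d)) (k : Fin d) : |x k| ≤ ‖x‖ := by
  have h1 : (x k)^2 ≤ ‖x‖^2 := by
    rw [eucl_norm_sq]
    exact Finset.single_le_sum (f := fun i => (x i)^2) (fun i _ => sq_nonneg _)
      (Finset.mem_univ k)
  have h2 : |x k|^2 ≤ ‖x‖^2 := by rwa [sq_abs]
  have := sq_le_sq' (a := |x k|) (b := ‖x‖)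
  nlinarith [abs_nonneg (x k), norm_nonneg x]

lemma contDiff_line {g : EuclideanSpace ℝ (Fin d) → ℝ} (hg : ContDiff ℝ 2 g)
    (x e : EuclideanSpace ℝ (Fin d)) :
    ContDiff ℝ 2 (fun m : ℝ => g (x + m • e)) :=
  hg.comp (contDiff_const.add (contDiff_id.smul contDiff_const))

variable {d : ℕ}

lemma seminorm_bound (N : EuclideanSpace ℝ (Fin d) → ℝ)
    (hN_add : ∀ x y, N (x + y) ≤ N x + N y)
    (hN_smul : ∀ (a : ℝ) (x), N (a • x) = |a| * N x) :
    ∃ K : ℝ, 0 ≤ K ∧ (∀ x, 0 ≤ N x) ∧ ∀ x, N x ≤ K * ‖x‖ := by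
  have hN0 : N 0 = 0 := by
    have := hN_smul 0 0
    simpa using this
  have hNneg : ∀ x, 0 ≤ N x := by
    intro x
    have h1 : N (x + (-1:ℝ) • x) ≤ N x + N ((-1:ℝ) • x) := hN_add x _
    rw [hN_smul] at h1
    simp at h1
    rw [hN0] at h1
    linarith
  set K := ∑ k, N (EuclideanSpace.single k (1:ℝ)) with hK
  have hKnn : 0 ≤ K := Finset.sum_nonneg fun k _ => hNneg _
  refine ⟨K, hKnn, hNneg, fun x => ?_⟩
  have hdec : x = ∑ k, x k • EuclideanSpace.single k (1:ℝ) := by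
    ext i
    have : (∑ k, x k • EuclideanSpace.single k (1:ℝ)) i
        = ∑ k, (x k • EuclideanSpace.single k (1:ℝ)) i := by
      rw [WithLp.ofLp_sum, Finset.sum_apply]
    rw [this]
    simp [EuclideanSpace.single_apply]
  have hsum : N x ≤ ∑ k, N (x k • EuclideanSpace.single k (1:ℝ)) := by
    calc N x = N (∑ k, x k • EuclideanSpace.single k (1:ℝ)) := by rw [← hdec]
      _ ≤ _ := Finset.le_sum_of_subadditive N hN0.le hN_add _ _
  have hcoord : ∀ k : Fin d, |x k| ≤ ‖x‖ := by
    intro k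
    have h1 : (x k)^2 ≤ ‖x‖^2 := by
      rw [EuclideanSpace.norm_eq, Real.sq_sqrt (by positivity)]
      have : (x k)^2 ≤ ∑ i, ‖x i‖^2 :=
        Finset.single_le_sum (f := fun i => ‖x i‖^2)
          (fun i _ => by positivity) (Finset.mem_univ k) |>.trans_eq' (by
            rw [Real.norm_eq_abs, sq_abs])
      exact this
    nlinarith [abs_nonneg (x k), norm_nonneg x, sq_abs (x k)]
  calc N x ≤ ∑ k, N (x k • EuclideanSpace.single k (1:ℝ)) := hsum
    _ = ∑ k, |x k| * N (EuclideanSpace.single k (1:ℝ)) := by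
        simp_rw [hN_smul]
    _ ≤ ∑ k, ‖x‖ * N (EuclideanSpace.single k (1:ℝ)) := by
        apply Finset.sum_le_sum
        intro k _
        exact mul_le_mul_of_nonneg_right (hcoord k) (hNneg _)
    _ = K * ‖x‖ := by rw [← Finset.mul_sum, mul_comm]


lemma hasDerivAt_exp_quad' (a b c m : ℝ) :
    HasDerivAt (fun x : ℝ => Real.exp (a + b*x + c*x^2))
      ((b + 2*c*m) * Real.exp (a + b*m + c*m^2)) m := by
  have h : HasDerivAt (fun x : ℝ => a + b*x + c*x^2) (b + 2*c*m) m := by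
    have h1 : HasDerivAt (fun x : ℝ => b * x) b m := by
      simpa using (hasDerivAt_id m).const_mul b
    have h2 : HasDerivAt (fun x : ℝ => c * x^2) (c * (2*m)) m := by
      simpa using (hasDerivAt_pow 2 m).const_mul c
    have := ((hasDerivAt_const m a).add h1).add h2
    convert (show HasDerivAt (fun x : ℝ => a + b*x + c*x^2) _ m from this) using 1; ring
  have := h.exp
  convert this using 1; ring

-- time derivative of the barrier
lemma hasDerivAt_barrier (η q t2 τ s : ℝ) (hσ : 2*τ - t2 + s ≠ 0) :
    HasDerivAt (fun r => Real.exp (η*(t2-r) + q/(2*(2*τ-t2+r))))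
      ((-η - q/(2*(2*τ-t2+s)^2)) * Real.exp (η*(t2-s) + q/(2*(2*τ-t2+s)))) s := by
  have hfun : (fun r => Real.exp (η*(t2-r) + q/(2*(2*τ-t2+r))))
      = fun r => Real.exp ((η*t2 - η*r) + q * (2*(2*τ-t2+r))⁻¹) := by
    funext r; rw [mul_sub, div_eq_mul_inv]
  have i1 : HasDerivAt (fun r : ℝ => η*t2 - η*r) (-η) s := by
    have := (hasDerivAt_const s (η*t2)).sub ((hasDerivAt_id s).const_mul η)
    simpa using (show HasDerivAt (fun r : ℝ => η*t2 - η*r) _ s from this)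
  have i2 : HasDerivAt (fun r : ℝ => 2*(2*τ-t2+r)) 2 s := by
    have := ((hasDerivAt_id s).const_add (2*τ-t2)).const_mul 2
    simpa using this
  have h2σ : 2*(2*τ-t2+s) ≠ 0 := by
    intro h; apply hσ; linarith [(mul_eq_zero.1 h).resolve_left (by norm_num : (2:ℝ) ≠ 0)]
  have i3 := i2.inv h2σ
  have i4 := i3.const_mul q
  have i5 := (i1.add i4).exp
  rw [hfun]
  convert (show HasDerivAt (fun r => Real.exp ((η*t2 - η*r) + q * (2*(2*τ-t2+r))⁻¹)) (Real.exp ((η*t2 - η*s) + q * (2*(2*τ-t2+s))⁻¹) * (-η + q * (-2 / (2 * (2 * τ - t2 + s)) ^ 2))) s from i5) using 1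
  rw [mul_sub, div_eq_mul_inv]
  have hσ2 : (2*τ-t2+s)^2 ≠ 0 := pow_ne_zero 2 hσ
  field_simp
  ring


lemma lap_barrier (d : ℕ) (η t2 τ s : ℝ) (hσ : 2*τ-t2+s ≠ 0)
    (x : EuclideanSpace ℝ (Fin d)) :
    lap d (fun y => Real.exp (η*(t2-s) + ‖y‖^2/(2*(2*τ-t2+s)))) x
      = (‖x‖^2/(2*τ-t2+s)^2 + d/(2*τ-t2+s))
          * Real.exp (η*(t2-s) + ‖x‖^2/(2*(2*τ-t2+s))) := by
  set σ := 2*τ-t2+s with hσdef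
  have hk : ∀ k : Fin d,
      (fun m : ℝ => Real.exp (η*(t2-s) + ‖x + m • EuclideanSpace.single k (1:ℝ)‖^2/(2*σ)))
      = fun m : ℝ => Real.exp ((η*(t2-s) + ‖x‖^2/(2*σ)) + (x k/σ)*m + (1/(2*σ))*m^2) := by
    intro k
    funext m
    rw [norm_line_sq]
    congr 1
    field_simp
    ring
  unfold lap
  have hterm : ∀ k : Fin d,
      iteratedDeriv 2 (fun m : ℝ =>
        Real.exp (η*(t2-s) + ‖x + m • EuclideanSpace.single k (1:ℝ)‖^2/(2*σ))) 0
      = ((x k)^2/σ^2 + 1/σ) * Real.exp (η*(t2-s) + ‖x‖^2/(2*σ)) := by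
    intro k
    rw [hk k, iteratedDeriv_two_exp_quad]
    congr 1
    field_simp
  calc (∑ k : Fin d, iteratedDeriv 2 (fun m : ℝ =>
        Real.exp (η*(t2-s) + ‖x + m • EuclideanSpace.single k (1:ℝ)‖^2/(2*σ))) 0)
      = ∑ k : Fin d, ((x k)^2/σ^2 + 1/σ) * Real.exp (η*(t2-s) + ‖x‖^2/(2*σ)) := by
        exact Finset.sum_congr rfl fun k _ => hterm k
    _ = (‖x‖^2/σ^2 + d/σ) * Real.exp (η*(t2-s) + ‖x‖^2/(2*σ)) := by
        rw [← Finset.sum_mul]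
        congr 1
        rw [Finset.sum_add_distrib, ← Finset.sum_div, ← eucl_norm_sq]
        simp [Finset.card_univ]
        ring


set_option maxHeartbeats 1000000 in
lemma strip_max_principle (d : ℕ) (v : ℝ → EuclideanSpace ℝ (Fin d) → ℝ)
    (t1 t2 τ A β S ε : ℝ)
    (hτ : 0 < τ) (ht12 : t1 ≤ t2) (hlen : t2 - t1 ≤ τ)
    (hβ : 0 < β) (hτβ : 8 * τ * β ≤ 1)
    (hA : 0 < A) (hS : 0 ≤ S) (hε : 0 < ε)
    (hcont : ContinuousOn (fun p : ℝ × EuclideanSpace ℝ (Fin d) => v p.1 p.2)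
      (Icc t1 t2 ×ˢ univ))
    (hgrow : ∀ s ∈ Icc t1 t2, ∀ x, v s x ≤ A * Real.exp (β * ‖x‖^2))
    (hdiff : ∀ s ∈ Ico t1 t2, ∀ x, DifferentiableAt ℝ (fun r => v r x) s)
    (hC2 : ∀ s ∈ Ico t1 t2, ContDiff ℝ 2 (v s))
    (hineq : ∀ s ∈ Ico t1 t2, ∀ x, 0 ≤ deriv (fun r => v r x) s + (1/2) * lap d (v s) x)
    (hterm : ∀ x, v t2 x ≤ S) :
    ∀ s ∈ Icc t1 t2, ∀ x, v s x ≤ S +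
      ε * Real.exp (((d:ℝ)/(2*τ)+1)*(t2-s) + ‖x‖^2/(2*(2*τ-t2+s))) := by
  set η : ℝ := (d:ℝ)/(2*τ) + 1 with hηdef
  have hη : 0 < η := by positivity
  clear_value η
  -- bounds on σ(s) = 2τ - t2 + s
  have hσlb : ∀ s ∈ Icc t1 t2, τ ≤ 2*τ - t2 + s := by
    intro s hs; have := hs.1; linarith
  have hσub : ∀ s ∈ Icc t1 t2, 2*τ - t2 + s ≤ 2*τ := by
    intro s hs; have := hs.2; linarith
  -- lower bound for the barrier
  have hHlb : ∀ s ∈ Icc t1 t2, ∀ x : EuclideanSpace ℝ (Fin d),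
      Real.exp (2*β*‖x‖^2) ≤ Real.exp (η*(t2-s) + ‖x‖^2/(2*(2*τ-t2+s))) := by
    intro s hs x
    apply Real.exp_le_exp.2
    have h1 : 0 ≤ η*(t2-s) := mul_nonneg hη.le (by linarith [hs.2])
    have hσ1 : τ ≤ 2*τ - t2 + s := hσlb s hs
    have hσ2 : 2*τ - t2 + s ≤ 2*τ := hσub s hs
    have h2 : 2*β ≤ 1/(2*(2*τ-t2+s)) := by
      rw [le_div_iff₀ (by linarith)]
      nlinarith
    have h3 : 2*β*‖x‖^2 ≤ ‖x‖^2/(2*(2*τ-t2+s)) := by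
      rw [div_eq_mul_inv, ← one_div]
      calc 2*β*‖x‖^2 = ‖x‖^2 * (2*β) := by ring
        _ ≤ ‖x‖^2 * (1/(2*(2*τ-t2+s))) :=
            mul_le_mul_of_nonneg_left h2 (by positivity)
    calc 2*β*‖x‖^2 ≤ ‖x‖^2/(2*(2*τ-t2+s)) := h3
      _ ≤ η*(t2-s) + ‖x‖^2/(2*(2*τ-t2+s)) := by linarith
  by_contra hcon
  push_neg at hcon
  obtain ⟨s₀, hs₀, x₀, hx₀⟩ := hcon
  have hz₀ : S < v s₀ x₀ - ε * Real.exp (η*(t2-s₀) + ‖x₀‖^2/(2*(2*τ-t2+s₀))) := by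
    linarith [hx₀]
  set R : ℝ := max ‖x₀‖ (Real.sqrt (max 0 (Real.log (A/ε)/β))) with hRdef
  have hR0 : 0 ≤ R := le_trans (norm_nonneg x₀) (le_max_left _ _)
  have hout : ∀ s ∈ Icc t1 t2, ∀ x : EuclideanSpace ℝ (Fin d),
      R < ‖x‖ → v s x - ε * Real.exp (η*(t2-s) + ‖x‖^2/(2*(2*τ-t2+s))) ≤ 0 := by
    intro s hs x hRx
    have hq : Real.log (A/ε)/β ≤ ‖x‖^2 := by
      have h1 : Real.sqrt (max 0 (Real.log (A/ε)/β)) ≤ R := le_max_right _ _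
      have h2 : Real.sqrt (max 0 (Real.log (A/ε)/β))^2 ≤ ‖x‖^2 := by
        nlinarith [Real.sqrt_nonneg (max 0 (Real.log (A/ε)/β))]
      rw [Real.sq_sqrt (le_max_left _ _)] at h2
      exact le_trans (le_max_right _ _) h2
    have hAe : A ≤ ε * Real.exp (β*‖x‖^2) := by
      have h1 : Real.log (A/ε) ≤ β*‖x‖^2 := by
        rw [div_le_iff₀ hβ] at hq
        linarith [hq]
      have h2 : A/ε ≤ Real.exp (β*‖x‖^2) := by
        rw [← Real.exp_log (show (0:ℝ) < A/ε by positivity)]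
        exact Real.exp_le_exp.2 h1
      rw [div_le_iff₀ hε] at h2
      linarith
    have h3 := hgrow s hs x
    have h4 := hHlb s hs x
    have h5 : Real.exp (2*β*‖x‖^2) = Real.exp (β*‖x‖^2) * Real.exp (β*‖x‖^2) := by
      rw [← Real.exp_add]; ring_nf
    have hexp := Real.exp_pos (β*‖x‖^2)
    nlinarith [h3, h4, hAe]
  -- compact maximum
  set Kset : Set (ℝ × EuclideanSpace ℝ (Fin d)) :=
    Icc t1 t2 ×ˢ Metric.closedBall 0 R with hKdef
  have hKcomp : IsCompact Kset := isCompact_Icc.prod (isCompact_closedBall 0 R)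
  have hKsub : Kset ⊆ Icc t1 t2 ×ˢ univ := fun p hp => ⟨hp.1, mem_univ _⟩
  have hHcont : ContinuousOn (fun p : ℝ × EuclideanSpace ℝ (Fin d) =>
      Real.exp (η*(t2-p.1) + ‖p.2‖^2/(2*(2*τ-t2+p.1)))) (Icc t1 t2 ×ˢ univ) := by
    apply Real.continuous_exp.comp_continuousOn
    apply ContinuousOn.add
    · exact (continuous_const.mul (continuous_const.sub continuous_fst)).continuousOn
    · apply ContinuousOn.div
      · exact ((continuous_snd.norm).pow 2).continuousOn
      · exact (continuous_const.mul (continuous_const.add continuous_fst)).continuousOn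
      · intro p hp
        have h := hσlb p.1 hp.1
        exact (by linarith : (0:ℝ) < 2*(2*τ-t2+p.1)).ne'
  have hzcont : ContinuousOn (fun p : ℝ × EuclideanSpace ℝ (Fin d) =>
      v p.1 p.2 - ε * Real.exp (η*(t2-p.1) + ‖p.2‖^2/(2*(2*τ-t2+p.1))))
      (Icc t1 t2 ×ˢ univ) :=
    hcont.sub (hHcont.const_smul ε)
  have hp₀ : (s₀, x₀) ∈ Kset := by
    refine ⟨hs₀, ?_⟩
    rw [Metric.mem_closedBall, dist_zero_right]
    exact le_max_left _ _
  obtain ⟨pstar, hpK, hpmax⟩ :=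
    hKcomp.exists_isMaxOn ⟨(s₀,x₀), hp₀⟩ (hzcont.mono hKsub)
  obtain ⟨sstar, xstar⟩ := pstar
  have hsIcc : sstar ∈ Icc t1 t2 := hpK.1
  have hstar : S < v sstar xstar
      - ε * Real.exp (η*(t2-sstar) + ‖xstar‖^2/(2*(2*τ-t2+sstar))) := by
    have h2 : v s₀ x₀ - ε * Real.exp (η*(t2-s₀) + ‖x₀‖^2/(2*(2*τ-t2+s₀)))
        ≤ v sstar xstar - ε * Real.exp (η*(t2-sstar) + ‖xstar‖^2/(2*(2*τ-t2+sstar))) :=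
      hpmax hp₀
    linarith [hz₀]
  have hglob : ∀ s ∈ Icc t1 t2, ∀ x,
      v s x - ε * Real.exp (η*(t2-s) + ‖x‖^2/(2*(2*τ-t2+s)))
      ≤ v sstar xstar - ε * Real.exp (η*(t2-sstar) + ‖xstar‖^2/(2*(2*τ-t2+sstar))) := by
    intro s hs x
    by_cases h : ‖x‖ ≤ R
    · exact hpmax (show (s,x) ∈ Kset from
        ⟨hs, by rw [Metric.mem_closedBall, dist_zero_right]; exact h⟩)
    · exact le_trans (hout s hs x (lt_of_not_ge h)) (le_trans hS hstar.le)
  have hHpos : (0:ℝ) < Real.exp (η*(t2-sstar) + ‖xstar‖^2/(2*(2*τ-t2+sstar))) :=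
    Real.exp_pos _
  have hneq : sstar ≠ t2 := by
    intro h
    subst h
    have h1 := hterm xstar
    nlinarith [hstar, Real.exp_pos (η*(sstar-sstar) + ‖xstar‖^2/(2*(2*τ-sstar+sstar)))]
  have hsIco : sstar ∈ Ico t1 t2 := ⟨hsIcc.1, lt_of_le_of_ne hsIcc.2 hneq⟩
  have hσne : 2*τ - t2 + sstar ≠ 0 := by
    have := hσlb sstar hsIcc; intro h; rw [h] at this; linarith
  have hστ : τ ≤ 2*τ - t2 + sstar := hσlb sstar hsIcc
  -- time derivative at the max
  have hHd := hasDerivAt_barrier η (‖xstar‖^2) t2 τ sstar hσne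
  have hvd := (hdiff sstar hsIco xstar).hasDerivAt
  have hφd := hvd.sub (hHd.const_mul ε)
  have hφmax : ∀ r ∈ Icc sstar t2, (fun r => v r xstar -
      ε * Real.exp (η*(t2-r) + ‖xstar‖^2/(2*(2*τ-t2+r)))) r
      ≤ (fun r => v r xstar -
      ε * Real.exp (η*(t2-r) + ‖xstar‖^2/(2*(2*τ-t2+r)))) sstar := by
    intro r hr
    exact hglob r ⟨le_trans hsIcc.1 hr.1, hr.2⟩ xstar
  have htime := deriv_nonpos_of_isMaxOn_Icc hsIco.2 hφd.differentiableAt hφmax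
  rw [hφd.deriv] at htime
  -- spatial second derivatives at the max
  have hlapv : lap d (v sstar) xstar ≤
      ε * ((‖xstar‖^2/(2*τ-t2+sstar)^2 + d/(2*τ-t2+sstar))
        * Real.exp (η*(t2-sstar) + ‖xstar‖^2/(2*(2*τ-t2+sstar)))) := by
    have hkle : ∀ k : Fin d,
        iteratedDeriv 2 (fun m : ℝ => v sstar (xstar + m • EuclideanSpace.single k (1:ℝ))) 0
        ≤ ε * iteratedDeriv 2 (fun m : ℝ => Real.exp (η*(t2-sstar) +
            ‖xstar + m • EuclideanSpace.single k (1:ℝ)‖^2/(2*(2*τ-t2+sstar)))) 0 := by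
      intro k
      have hf : ContDiff ℝ 2 (fun m : ℝ => v sstar (xstar + m • EuclideanSpace.single k (1:ℝ))) :=
        contDiff_line (hC2 sstar hsIco) xstar _
      have hgq : (fun m : ℝ => Real.exp (η*(t2-sstar) +
          ‖xstar + m • EuclideanSpace.single k (1:ℝ)‖^2/(2*(2*τ-t2+sstar))))
          = fun m : ℝ => Real.exp ((η*(t2-sstar) + ‖xstar‖^2/(2*(2*τ-t2+sstar)))
            + (xstar k/(2*τ-t2+sstar))*m + (1/(2*(2*τ-t2+sstar)))*m^2) := by
        funext m
        rw [norm_line_sq]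
        congr 1
        field_simp
        ring
      have hg : ContDiff ℝ 2 (fun m : ℝ => Real.exp (η*(t2-sstar) +
          ‖xstar + m • EuclideanSpace.single k (1:ℝ)‖^2/(2*(2*τ-t2+sstar)))) := by
        rw [hgq]; exact contDiff_exp_quad _ _ _
      have hmaxk : ∀ m : ℝ, (fun m : ℝ =>
          v sstar (xstar + m • EuclideanSpace.single k (1:ℝ)) -
          ε * Real.exp (η*(t2-sstar) +
            ‖xstar + m • EuclideanSpace.single k (1:ℝ)‖^2/(2*(2*τ-t2+sstar)))) m
          ≤ (fun m : ℝ =>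
          v sstar (xstar + m • EuclideanSpace.single k (1:ℝ)) -
          ε * Real.exp (η*(t2-sstar) +
            ‖xstar + m • EuclideanSpace.single k (1:ℝ)‖^2/(2*(2*τ-t2+sstar)))) 0 := by
        intro m
        have h0 : xstar + (0:ℝ) • EuclideanSpace.single k (1:ℝ) = xstar := by simp
        simp only [h0]
        exact hglob sstar hsIcc (xstar + m • EuclideanSpace.single k (1:ℝ))
      have hsplit := iteratedDeriv_two_sub ε hf hg
      have hle := iteratedDeriv_two_nonpos_of_max (hf.sub (contDiff_const.mul hg)) hmaxk
      rw [hsplit] at hle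
      linarith
    have hsum := Finset.sum_le_sum (fun k (_ : k ∈ Finset.univ) => hkle k)
    have hlb := lap_barrier d η t2 τ sstar hσne xstar
    unfold lap at hlb ⊢
    calc (∑ k : Fin d, iteratedDeriv 2
          (fun m : ℝ => v sstar (xstar + m • EuclideanSpace.single k (1:ℝ))) 0)
        ≤ ∑ k : Fin d, ε * iteratedDeriv 2 (fun m : ℝ => Real.exp (η*(t2-sstar) +
            ‖xstar + m • EuclideanSpace.single k (1:ℝ)‖^2/(2*(2*τ-t2+sstar)))) 0 := hsum
      _ = ε * ∑ k : Fin d, iteratedDeriv 2 (fun m : ℝ => Real.exp (η*(t2-sstar) +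
            ‖xstar + m • EuclideanSpace.single k (1:ℝ)‖^2/(2*(2*τ-t2+sstar)))) 0 := by
          rw [Finset.mul_sum]
      _ = ε * ((‖xstar‖^2/(2*τ-t2+sstar)^2 + d/(2*τ-t2+sstar))
          * Real.exp (η*(t2-sstar) + ‖xstar‖^2/(2*(2*τ-t2+sstar)))) := by
          rw [hlb]
  -- combine
  have hpde := hineq sstar hsIco xstar
  set σ : ℝ := 2*τ - t2 + sstar with hσdef
  set Hv : ℝ := Real.exp (η*(t2-sstar) + ‖xstar‖^2/(2*σ)) with hHvdef
  have hσpos : 0 < σ := lt_of_lt_of_le hτ hστ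
  clear_value σ
  clear_value Hv
  have hd2' : (d:ℝ)/(2*σ) ≤ (d:ℝ)/(2*τ) := by
    apply div_le_div_of_nonneg_left (by positivity) (by linarith) (by linarith)
  have e1 : ε * ((-η - ‖xstar‖^2/(2*σ^2)) * Hv) + (1/2) * (ε * ((‖xstar‖^2/σ^2 + d/σ) * Hv))
      = ε * Hv * ((d:ℝ)/(2*σ) - η) := by
    ring
  have hfin : deriv (fun r => v r xstar) sstar + (1/2) * lap d (v sstar) xstar
      ≤ ε * Hv * ((d:ℝ)/(2*σ) - η) := by
    rw [← e1]
    have h2 := mul_le_mul_of_nonneg_left hlapv (by norm_num : (0:ℝ) ≤ 1/2)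
    linarith [htime]
  have hηged : (d:ℝ)/(2*σ) - η ≤ -1 := by
    rw [hηdef]; linarith [hd2']
  have hmul := mul_le_mul_of_nonneg_left hηged (mul_pos hε hHpos).le
  have hHneg : ε * Hv * ((d:ℝ)/(2*σ) - η) ≤ -(ε * Hv) := by
    calc ε * Hv * ((d:ℝ)/(2*σ) - η) ≤ ε * Hv * (-1) := hmul
      _ = -(ε * Hv) := by ring
  linarith [hpde, hfin, hHneg, mul_pos hε hHpos]


lemma lap_eq (d : ℕ) (g : EuclideanSpace ℝ (Fin d) → ℝ) (x : EuclideanSpace ℝ (Fin d)) :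
    lap d g x = ∑ k : Fin d,
      iteratedDeriv 2 (fun m : ℝ => g (x + m • EuclideanSpace.single k (1:ℝ))) 0 := rfl

lemma supersol (d : ℕ) (c T F : ℝ) (u : ℝ → EuclideanSpace ℝ (Fin d) → ℝ)
    (s : ℝ) (x : EuclideanSpace ℝ (Fin d))
    (hd : DifferentiableAt ℝ (fun r => u r x) s) (hC2 : ContDiff ℝ 2 (u s))
    (hpde : deriv (fun r => u r x) s + (1/2) * lap d (u s) x + F = 0)
    (hco : u s x * F ≤ c * (1 + u s x ^ 2)) :
    0 ≤ deriv (fun r => (1 + u r x ^ 2) * Real.exp (2*c*(r-T))) s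
      + (1/2) * lap d (fun y => (1 + u s y ^ 2) * Real.exp (2*c*(s-T))) x := by
  set U := u s x with hU
  set U' := deriv (fun r => u r x) s with hU'
  set L := lap d (u s) x with hL
  set E' := Real.exp (2*c*(s-T)) with hE'
  have hE'pos : 0 < E' := Real.exp_pos _
  -- time derivative
  have p1 : HasDerivAt (fun r => 1 + u r x ^ 2) (2*U*U') s := by
    have := (hd.hasDerivAt.pow 2).const_add 1
    convert (show HasDerivAt (fun r => 1 + u r x ^ 2) _ s from this) using 1
    simp [hU, hU']
  have q1 : HasDerivAt (fun r : ℝ => 2*c*(r-T)) (2*c) s := by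
    have := ((hasDerivAt_id s).sub_const T).const_mul (2*c)
    simpa using this
  have p2 : HasDerivAt (fun r : ℝ => Real.exp (2*c*(r-T))) (E' * (2*c)) s := q1.exp
  have h1 := p1.mul p2
  have hderiv : deriv (fun r => (1 + u r x ^ 2) * Real.exp (2*c*(r-T))) s
      = 2*U*U' * E' + (1 + U^2) * (E' * (2*c)) := h1.deriv
  -- laplacian
  have hlap : lap d (fun y => (1 + u s y ^ 2) * Real.exp (2*c*(s-T))) x
      = (2 * ∑ k : Fin d, (deriv (fun m : ℝ =>
          u s (x + m • EuclideanSpace.single k (1:ℝ))) 0)^2) * E'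
        + (2 * U * L) * E' := by
    rw [lap_eq]
    have hterm : ∀ k : Fin d,
        iteratedDeriv 2 (fun m : ℝ => (1 + u s (x + m • EuclideanSpace.single k (1:ℝ)) ^ 2)
          * Real.exp (2*c*(s-T))) 0
        = (2*(deriv (fun m : ℝ => u s (x + m • EuclideanSpace.single k (1:ℝ))) 0)^2
            + 2*U*(iteratedDeriv 2 (fun m : ℝ =>
                u s (x + m • EuclideanSpace.single k (1:ℝ))) 0)) * E' := by
      intro k
      have hgk : ContDiff ℝ 2 (fun m : ℝ => u s (x + m • EuclideanSpace.single k (1:ℝ))) :=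
        contDiff_line hC2 x _
      have h2 : iteratedDeriv 2 (fun m : ℝ =>
          (1 + u s (x + m • EuclideanSpace.single k (1:ℝ)) ^ 2) * Real.exp (2*c*(s-T))) 0
          = (2*(deriv (fun m : ℝ => u s (x + m • EuclideanSpace.single k (1:ℝ))) 0)^2
            + 2*(u s (x + (0:ℝ) • EuclideanSpace.single k (1:ℝ)))
              *(deriv (deriv (fun m : ℝ => u s (x + m • EuclideanSpace.single k (1:ℝ)))) 0)) * E' :=
        iteratedDeriv_two_one_add_sq_mul hgk E'
      have h0 : x + (0:ℝ) • EuclideanSpace.single k (1:ℝ) = x := by simp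
      rw [h0, ← itd2'] at h2
      rw [hE'] at h2
      exact h2
    calc (∑ k : Fin d, iteratedDeriv 2 (fun m : ℝ =>
          (1 + u s (x + m • EuclideanSpace.single k (1:ℝ)) ^ 2) * Real.exp (2*c*(s-T))) 0)
        = ∑ k : Fin d, (2*(deriv (fun m : ℝ =>
            u s (x + m • EuclideanSpace.single k (1:ℝ))) 0)^2
            + 2*U*(iteratedDeriv 2 (fun m : ℝ =>
                u s (x + m • EuclideanSpace.single k (1:ℝ))) 0)) * E' :=
          Finset.sum_congr rfl fun k _ => hterm k
      _ = (2 * ∑ k : Fin d, (deriv (fun m : ℝ =>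
            u s (x + m • EuclideanSpace.single k (1:ℝ))) 0)^2) * E' + (2 * U * L) * E' := by
          rw [hL, lap_eq, ← Finset.sum_mul, Finset.sum_add_distrib,
            ← Finset.mul_sum, ← Finset.mul_sum]
          ring
  rw [hderiv, hlap]
  set P := ∑ k : Fin d, (deriv (fun m : ℝ =>
      u s (x + m • EuclideanSpace.single k (1:ℝ))) 0)^2 with hP
  have hPnn : 0 ≤ P := Finset.sum_nonneg fun k _ => sq_nonneg _
  have hU'eq : U' = -F - (1/2)*L := by
    rw [hU', hL] at *
    linarith [hpde]
  have e2 : 2*U*U' * E' + (1 + U^2) * (E' * (2*c)) + (1/2)*((2*P)*E' + (2*U*L)*E')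
      = E' * ((2*c*(1+U^2) - 2*(U*F)) + P) := by
    rw [hU'eq]; ring
  rw [e2]
  apply mul_nonneg hE'pos.le
  have : U * F ≤ c * (1 + U^2) := hco
  linarith

end Helpers

set_option maxHeartbeats 1000000

theorem apriori_bound_backward_reaction_diffusion (d : ℕ) (T : ℝ) (hT : 0 < T) (c : ℝ)
    (f : ℝ → EuclideanSpace ℝ (Fin d) → ℝ → ℝ)
    (hcoercive : ∀ t ∈ Set.Icc (0:ℝ) T, ∀ (x : EuclideanSpace ℝ (Fin d)) (y : ℝ),
      y * f t x y ≤ c * (1 + y ^ 2))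
    (u : ℝ → EuclideanSpace ℝ (Fin d) → ℝ)
    (hucont : ContinuousOn (fun p : ℝ × EuclideanSpace ℝ (Fin d) => u p.1 p.2)
      (Set.Icc 0 T ×ˢ Set.univ))
    (husmooth : ∀ t ∈ Set.Ico (0:ℝ) T, ∀ x : EuclideanSpace ℝ (Fin d),
      DifferentiableAt ℝ (fun s => u s x) t ∧ ContDiff ℝ 2 (u t))
    (N : EuclideanSpace ℝ (Fin d) → ℝ)
    (hN_add : ∀ x y, N (x + y) ≤ N x + N y)
    (hN_smul : ∀ (a : ℝ) (x), N (a • x) = |a| * N x)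
    (hN_eq_zero : ∀ x, N x = 0 → x = 0)
    (hgrowth : ∃ a C : ℝ, ∀ s ∈ Set.Icc (0:ℝ) T, ∀ y : EuclideanSpace ℝ (Fin d),
      Real.exp (a * N y ^ 2) * |u s y| ≤ C)
    (hpde : ∀ t ∈ Set.Ico (0:ℝ) T, ∀ x : EuclideanSpace ℝ (Fin d),
      deriv (fun s => u s x) t + (1/2) * lap d (u t) x + f t x (u t x) = 0)
    (t : ℝ) (ht : t ∈ Set.Icc (0:ℝ) T) :
    (⨆ x : EuclideanSpace ℝ (Fin d), ENNReal.ofReal |u t x|)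
      ≤ ENNReal.ofReal (Real.exp (c * (T - t)))
          * (1 + ⨆ x : EuclideanSpace ℝ (Fin d), ENNReal.ofReal (|u T x| ^ 2))
            ^ ((1:ℝ)/2) := by
  classical
  by_cases htop : (⨆ x : EuclideanSpace ℝ (Fin d), ENNReal.ofReal (|u T x| ^ 2)) = ⊤
  · rw [htop]
    rw [add_top, ENNReal.top_rpow_of_pos (by norm_num : (0:ℝ) < 1/2),
      ENNReal.mul_top (ENNReal.ofReal_pos.2 (Real.exp_pos _)).ne']
    exact le_top
  -- finite terminal supremum
  set M2 : ℝ := (⨆ x : EuclideanSpace ℝ (Fin d), ENNReal.ofReal (|u T x| ^ 2)).toReal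
    with hM2def
  have hM2nn : 0 ≤ M2 := ENNReal.toReal_nonneg
  have hM2b : ∀ x, |u T x| ^ 2 ≤ M2 := by
    intro x
    have h1 : ENNReal.ofReal (|u T x| ^ 2)
        ≤ ⨆ x : EuclideanSpace ℝ (Fin d), ENNReal.ofReal (|u T x| ^ 2) :=
      le_iSup (fun x => ENNReal.ofReal (|u T x| ^ 2)) x
    have h2 := ENNReal.toReal_mono htop h1
    rwa [ENNReal.toReal_ofReal (by positivity)] at h2
  set S : ℝ := 1 + M2 with hSdef
  have hSnn : (0:ℝ) ≤ S := by rw [hSdef]; linarith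
  -- growth constants
  obtain ⟨a, C0, hgr⟩ := hgrowth
  obtain ⟨K, hK0, hNneg, hNle⟩ := seminorm_bound N hN_add hN_smul
  have hC0 : 0 ≤ C0 :=
    le_trans (mul_nonneg (Real.exp_pos _).le (abs_nonneg _)) (hgr 0 ⟨le_rfl, hT.le⟩ 0)
  have hub : ∀ s ∈ Set.Icc (0:ℝ) T, ∀ y, |u s y| ≤ C0 * Real.exp (|a| * K^2*‖y‖^2) := by
    intro s hs y
    have h1 := hgr s hs y
    have hexp := Real.exp_pos (a * N y ^ 2)
    have h2 : |u s y| ≤ C0 / Real.exp (a * N y ^ 2) := by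
      rw [le_div_iff₀ hexp]
      calc |u s y| * Real.exp (a * N y ^ 2)
          = Real.exp (a * N y ^ 2) * |u s y| := by ring
        _ ≤ C0 := h1
    have h3 : C0 / Real.exp (a * N y ^ 2) = C0 * Real.exp (-(a * N y ^ 2)) := by
      rw [Real.exp_neg]; ring
    have h4 : -(a * N y ^ 2) ≤ |a| * K^2 * ‖y‖^2 := by
      have hN2 : N y ^ 2 ≤ (K*‖y‖)^2 := pow_le_pow_left₀ (hNneg y) (hNle y) 2
      have h5 : -(a * N y ^ 2) ≤ |a| * N y ^ 2 := by
        nlinarith [neg_abs_le a, le_abs_self a, sq_nonneg (N y)]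
      calc -(a * N y ^ 2) ≤ |a| * N y ^ 2 := h5
        _ ≤ |a| * (K*‖y‖)^2 := mul_le_mul_of_nonneg_left hN2 (abs_nonneg a)
        _ = |a| * K^2 * ‖y‖^2 := by ring
    calc |u s y| ≤ C0 * Real.exp (-(a * N y ^ 2)) := h3 ▸ h2
      _ ≤ C0 * Real.exp (|a| * K^2*‖y‖^2) :=
          mul_le_mul_of_nonneg_left (Real.exp_le_exp.2 h4) hC0
  set β : ℝ := 2*(|a| * K^2) + 1 with hβdef
  have hβ : 0 < β := by positivity
  have hβ2 : 2*(|a| * K^2) ≤ β := by rw [hβdef]; linarith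
  set A : ℝ := (1 + C0^2) * Real.exp (2*|c| * T) with hAdef
  have hA : 0 < A := by positivity
  set τ : ℝ := 1/(8*β) with hτdef
  have hτ : 0 < τ := by positivity
  have hτβ : 8*τ*β ≤ 1 := by
    rw [hτdef]
    rw [show 8*(1/(8*β))*β = (8*β)/(8*β) by ring]
    rw [div_self (by positivity : (8:ℝ)*β ≠ 0)]
  clear_value τ
  -- growth bound for v
  have hvgrow : ∀ s ∈ Set.Icc (0:ℝ) T, ∀ x,
      (1 + u s x ^ 2) * Real.exp (2*c*(s-T)) ≤ A * Real.exp (β*‖x‖^2) := by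
    intro s hs x
    have hE : Real.exp (2*c*(s-T)) ≤ Real.exp (2*|c| * T) := by
      apply Real.exp_le_exp.2
      have e1 : -|c| * (T-s) ≤ c*(T-s) :=
        mul_le_mul_of_nonneg_right (neg_abs_le c) (by linarith [hs.2])
      have e2 : |c| * (T-s) ≤ |c| * T :=
        mul_le_mul_of_nonneg_left (by linarith [hs.1]) (abs_nonneg c)
      nlinarith [e1, e2]
    have hu2 : u s x ^ 2 ≤ C0^2 * Real.exp (2*(|a| * K^2)*‖x‖^2) := by
      have h1 := hub s hs x
      have h2 : |u s x|^2 ≤ (C0 * Real.exp (|a| * K^2*‖x‖^2))^2 :=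
        pow_le_pow_left₀ (abs_nonneg _) h1 2
      rw [sq_abs] at h2
      have h3 : Real.exp (|a| * K^2*‖x‖^2) ^ 2 = Real.exp (2*(|a| * K^2)*‖x‖^2) := by
        rw [pow_two, ← Real.exp_add]; congr 1; ring
      calc u s x ^ 2 ≤ (C0 * Real.exp (|a| * K^2*‖x‖^2))^2 := h2
        _ = C0^2 * Real.exp (2*(|a| * K^2)*‖x‖^2) := by rw [mul_pow, h3]
    have hexps : Real.exp (2*(|a| * K^2)*‖x‖^2) ≤ Real.exp (β*‖x‖^2) :=
      Real.exp_le_exp.2 (mul_le_mul_of_nonneg_right hβ2 (sq_nonneg ‖x‖))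
    have hone : (1:ℝ) ≤ Real.exp (β*‖x‖^2) :=
      Real.one_le_exp (by positivity)
    have h5 : C0^2 * Real.exp (2*(|a| * K^2)*‖x‖^2) ≤ C0^2 * Real.exp (β*‖x‖^2) :=
      mul_le_mul_of_nonneg_left hexps (by positivity)
    calc (1 + u s x ^ 2) * Real.exp (2*c*(s-T))
        ≤ (1 + C0^2 * Real.exp (2*(|a| * K^2)*‖x‖^2)) * Real.exp (2*|c| * T) := by
          apply mul_le_mul (by linarith [hu2]) hE (Real.exp_pos _).le
          positivity
      _ ≤ ((1 + C0^2) * Real.exp (β*‖x‖^2)) * Real.exp (2*|c| * T) := by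
          apply mul_le_mul_of_nonneg_right _ (Real.exp_pos _).le
          nlinarith [hone, h5]
      _ = A * Real.exp (β*‖x‖^2) := by rw [hAdef]; ring
  clear_value β A
  -- continuity of v
  have hvcont : ContinuousOn (fun p : ℝ × EuclideanSpace ℝ (Fin d) =>
      (1 + u p.1 p.2 ^ 2) * Real.exp (2*c*(p.1 - T))) (Set.Icc 0 T ×ˢ Set.univ) := by
    apply ContinuousOn.mul
    · exact continuousOn_const.add (hucont.pow 2)
    · exact (Real.continuous_exp.comp
        (continuous_const.mul (continuous_fst.sub continuous_const))).continuousOn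
  -- C² in space
  have hvC2 : ∀ s ∈ Set.Ico (0:ℝ) T,
      ContDiff ℝ 2 (fun y => (1 + u s y ^ 2) * Real.exp (2*c*(s-T))) := by
    intro s hs
    have h := (husmooth s hs 0).2
    exact (contDiff_const.add (h.pow 2)).mul contDiff_const
  -- time differentiability
  have hvdiff : ∀ s ∈ Set.Ico (0:ℝ) T, ∀ x,
      DifferentiableAt ℝ (fun r => (1 + u r x ^ 2) * Real.exp (2*c*(r-T))) s := by
    intro s hs x
    have hd := (husmooth s hs x).1
    have h2 : DifferentiableAt ℝ (fun r : ℝ => Real.exp (2*c*(r-T))) s :=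
      (((differentiableAt_id.sub (differentiableAt_const T)).const_mul (2*c)).exp)
    exact ((differentiableAt_const 1).add (hd.pow 2)).mul h2
  -- supersolution inequality
  have hvineq : ∀ s ∈ Set.Ico (0:ℝ) T, ∀ x,
      0 ≤ deriv (fun r => (1 + u r x ^ 2) * Real.exp (2*c*(r-T))) s
        + (1/2) * lap d (fun y => (1 + u s y ^ 2) * Real.exp (2*c*(s-T))) x := by
    intro s hs x
    have h := hpde s hs x
    exact supersol d c T (f s x (u s x)) u s x (husmooth s hs x).1 (husmooth s hs x).2
      (by linarith [h]) (hcoercive s ⟨hs.1, hs.2.le⟩ x (u s x))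
  -- terminal bound
  have hvterm : ∀ x, (1 + u T x ^ 2) * Real.exp (2*c*(T-T)) ≤ S := by
    intro x
    rw [sub_self, mul_zero, Real.exp_zero, mul_one, hSdef]
    have := hM2b x
    rw [sq_abs] at this
    linarith
  -- induction over strips
  have key : ∀ n : ℕ, ∀ s, s ∈ Set.Icc (0:ℝ) T → T - s ≤ (n:ℝ) * τ →
      ∀ x, (1 + u s x ^ 2) * Real.exp (2*c*(s-T)) ≤ S := by
    intro n
    induction n with
    | zero =>
      intro s hs h0 x
      have hsT : s = T := by
        simp only [Nat.cast_zero, zero_mul] at h0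
        linarith [hs.2]
      rw [hsT]
      exact hvterm x
    | succ n ih =>
      intro s hs hsn x
      set t2 : ℝ := min (s + τ) T with ht2def
      have ht2Icc : t2 ∈ Set.Icc (0:ℝ) T :=
        ⟨le_min (by linarith [hs.1]) hT.le, min_le_right _ _⟩
      have hst2 : s ≤ t2 := le_min (by linarith) hs.2
      have hlen2 : t2 - s ≤ τ := by
        have := min_le_left (s+τ) T
        linarith
      have hterm2 : ∀ y, (1 + u t2 y ^ 2) * Real.exp (2*c*(t2-T)) ≤ S := by
        intro y
        apply ih t2 ht2Icc _ y
        rcases le_or_gt (s + τ) T with h | h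
        · rw [ht2def, min_eq_left h]
          push_cast at hsn
          linarith
        · rw [ht2def, min_eq_right h.le]
          have : (0:ℝ) ≤ (n:ℝ) * τ := by positivity
          linarith
      have happ := strip_max_principle d
        (fun s x => (1 + u s x ^ 2) * Real.exp (2*c*(s-T))) s t2 τ A β S
      have hsub1 : Set.Icc s t2 ×ˢ (Set.univ : Set (EuclideanSpace ℝ (Fin d)))
          ⊆ Set.Icc 0 T ×ˢ Set.univ :=
        Set.prod_mono (Set.Icc_subset_Icc hs.1 ht2Icc.2) subset_rfl
      have hIccsub : Set.Icc s t2 ⊆ Set.Icc (0:ℝ) T :=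
        Set.Icc_subset_Icc hs.1 ht2Icc.2
      have hIcosub : Set.Ico s t2 ⊆ Set.Ico (0:ℝ) T := fun r hr =>
        ⟨le_trans hs.1 hr.1, lt_of_lt_of_le hr.2 ht2Icc.2⟩
      -- conclude via ε → 0
      by_contra hlt
      push_neg at hlt
      set Hv : ℝ := Real.exp (((d:ℝ)/(2*τ)+1)*(t2-s) + ‖x‖^2/(2*(2*τ-t2+s))) with hHvdef
      have hHvpos : 0 < Hv := Real.exp_pos _
      set ε : ℝ := ((1 + u s x ^ 2) * Real.exp (2*c*(s-T)) - S) / (2 * Hv) with hεdef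
      have hεpos : 0 < ε := by
        rw [hεdef]
        apply div_pos (by linarith [hlt]) (by positivity)
      have hconc := happ ε hτ hst2 hlen2 hβ hτβ hA hSnn hεpos
        (hvcont.mono hsub1)
        (fun r hr y => hvgrow r (hIccsub hr) y)
        (fun r hr y => hvdiff r (hIcosub hr) y)
        (fun r hr => hvC2 r (hIcosub hr))
        (fun r hr y => hvineq r (hIcosub hr) y)
        hterm2 s ⟨le_refl s, hst2⟩ x
      have hεH : ε * Hv = ((1 + u s x ^ 2) * Real.exp (2*c*(s-T)) - S) / 2 := by
        rw [hεdef]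
        field_simp
      rw [hεH] at hconc
      linarith [hconc, hlt]
  -- apply at t
  have hvt : ∀ x, (1 + u t x ^ 2) * Real.exp (2*c*(t-T)) ≤ S := by
    intro x
    apply key (⌈T/τ⌉₊) t ht _ x
    have h1 : T/τ ≤ (⌈T/τ⌉₊ : ℝ) := Nat.le_ceil _
    have h2 : T ≤ (⌈T/τ⌉₊ : ℝ) * τ := by
      rw [div_le_iff₀ hτ] at h1
      linarith
    linarith [ht.1]
  -- pointwise bound
  have hfinal : ∀ x, |u t x| ≤ Real.exp (c*(T-t)) * Real.sqrt S := by
    intro x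
    have h0 := hvt x
    have he : Real.exp (2*c*(t-T)) * Real.exp (2*c*(T-t)) = 1 := by
      rw [← Real.exp_add]
      rw [show 2*c*(t-T) + 2*c*(T-t) = 0 by ring]
      exact Real.exp_zero
    have h1 : u t x ^ 2 ≤ S * Real.exp (2*c*(T-t)) := by
      have h2 := mul_le_mul_of_nonneg_right h0 (Real.exp_pos (2*c*(T-t))).le
      rw [mul_assoc, he, mul_one] at h2
      nlinarith [h2]
    have h3 : |u t x| ≤ Real.sqrt (S * Real.exp (2*c*(T-t))) := by
      rw [← Real.sqrt_sq_eq_abs]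
      exact Real.sqrt_le_sqrt h1
    have h4 : Real.sqrt (S * Real.exp (2*c*(T-t)))
        = Real.sqrt S * Real.exp (c*(T-t)) := by
      rw [Real.sqrt_mul hSnn]
      congr 1
      rw [show 2*c*(T-t) = (c*(T-t)) * 2 by ring]
      rw [show Real.exp (c*(T-t) * 2) = (Real.exp (c*(T-t)))^2 by
        rw [pow_two, ← Real.exp_add]; congr 1; ring]
      exact Real.sqrt_sq (Real.exp_pos _).le
    rw [h4] at h3
    linarith [h3]
  -- ENNReal conclusion
  apply iSup_le
  intro x
  have hb := hfinal x
  have hofS : ENNReal.ofReal S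
      = 1 + ⨆ x : EuclideanSpace ℝ (Fin d), ENNReal.ofReal (|u T x| ^ 2) := by
    rw [hSdef, ENNReal.ofReal_add (by norm_num) hM2nn]
    rw [ENNReal.ofReal_one, hM2def, ENNReal.ofReal_toReal htop]
  calc ENNReal.ofReal |u t x|
      ≤ ENNReal.ofReal (Real.exp (c*(T-t)) * Real.sqrt S) :=
        ENNReal.ofReal_le_ofReal hb
    _ = ENNReal.ofReal (Real.exp (c*(T-t))) * ENNReal.ofReal (Real.sqrt S) :=
        ENNReal.ofReal_mul (Real.exp_pos _).le
    _ = ENNReal.ofReal (Real.exp (c*(T-t)))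
          * (1 + ⨆ x : EuclideanSpace ℝ (Fin d), ENNReal.ofReal (|u T x| ^ 2))
            ^ ((1:ℝ)/2) := by
        congr 1
        rw [Real.sqrt_eq_rpow]
        rw [← ENNReal.ofReal_rpow_of_nonneg hSnn (by norm_num : (0:ℝ) ≤ 1/2)]
        rw [hofS]
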